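/- For the layer-norm hash function φ(z) = (z, 1, -z, -1)/√(2z² + 2) defined on natural numbers, the inner product φ(i)·φ(j) equals 1 if and only if i = j. -/

import Mathlib

/-- The layer-norm hash: φ(z) = (z, 1, -z, -1) / √(2z² + 2). -/
noncomputable def lnHash (z : ℕ) : Fin 4 → ℝ :=
  fun i => (![(z : ℝ), 1, -(z : ℝ), -1] i) / Real.sqrt (2 * (z : ℝ) ^ 2 + 2)

theorem lnHash_inner_eq_one_iff (i j : ℕ) :
    (∑ k : Fin 4, lnHash i k * lnHash j k) = 1 ↔ i = j := by
  set a := (i : ℝ)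
  set b := (j : ℝ)
  have ha : (0:ℝ) < 2 * a ^ 2 + 2 := by positivity
  have hb : (0:ℝ) < 2 * b ^ 2 + 2 := by positivity
  have hsa : Real.sqrt (2 * a ^ 2 + 2) > 0 := Real.sqrt_pos.mpr ha
  have hsb : Real.sqrt (2 * b ^ 2 + 2) > 0 := Real.sqrt_pos.mpr hb
  have hsa2 : Real.sqrt (2 * a ^ 2 + 2) ^ 2 = 2 * a ^ 2 + 2 := Real.sq_sqrt ha.le
  have hsb2 : Real.sqrt (2 * b ^ 2 + 2) ^ 2 = 2 * b ^ 2 + 2 := Real.sq_sqrt hb.le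
  have hsum : (∑ k : Fin 4, lnHash i k * lnHash j k)
      = (2 * (a * b) + 2) / (Real.sqrt (2 * a ^ 2 + 2) * Real.sqrt (2 * b ^ 2 + 2)) := by
    simp [lnHash, Fin.sum_univ_four]
    ring
  rw [hsum]
  constructor
  · intro h
    have h1 : 2 * (a * b) + 2 = Real.sqrt (2 * a ^ 2 + 2) * Real.sqrt (2 * b ^ 2 + 2) := by
      field_simp at h
      ring_nf at h ⊢
      linarith
    have h2 : (2 * (a * b) + 2) ^ 2 = (2 * a ^ 2 + 2) * (2 * b ^ 2 + 2) := by
      rw [h1]; nlinarith [hsa2, hsb2]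
    have hab : a = b := by nlinarith [sq_nonneg (a - b)]
    exact Nat.cast_inj.mp hab
  · intro h
    subst h
    rw [Real.mul_self_sqrt ha.le]
    field_simp
    ring
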